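/- Let B¹ be a nonnegative irreducible matrix and z a vector with 0 ≪ z ≪ 1 satisfying (−I + (I − Z)B¹)z = 0 where Z = diag(z). Let C be a nonnegative irreducible matrix with Cz = z, and set B² = (I − Z)⁻¹C. Then for every β₁ ∈ [0,1], the point (β₁ z, (1 − β₁) z, 0) is an equilibrium of the tri-virus system with D^k = I for all k; that is, (−I + (I − β₁Z − (1−β₁)Z)B¹)(β₁ z) = 0 and (−I + (I − β₁Z − (1−β₁)Z)B²)((1−β₁) z) = 0 and the third equation holds trivially. -/
import Mathlib


open Matrix

/-- A nonnegative matrix is irreducible if for every `(i, j)` some power has a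
strictly positive `(i, j)` entry. -/
def IrredNonneg {n : ℕ} (B : Matrix (Fin n) (Fin n) ℝ) : Prop :=
  (∀ i j, 0 ≤ B i j) ∧ ∀ i j, ∃ k : ℕ, 0 < (B ^ (k + 1)) i j

/-- Line of coexistence equilibria: with `D^k = I`, `z` the endemic equilibrium
of virus 1, `Cz = z`, and `B² = (I − Z)⁻¹C`, each point `(β z, (1−β) z, 0)`
with `β ∈ [0, 1]` is an equilibrium of the tri-virus system. -/
theorem stmt11 (n : ℕ) (B1 : Matrix (Fin n) (Fin n) ℝ) (hB1 : IrredNonneg B1)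
    (z : Fin n → ℝ) (hz : ∀ i, 0 < z i ∧ z i < 1)
    (heqz : (-(1 : Matrix (Fin n) (Fin n) ℝ) +
      ((1 : Matrix (Fin n) (Fin n) ℝ) - Matrix.diagonal z) * B1) *ᵥ z = 0)
    (C : Matrix (Fin n) (Fin n) ℝ) (hC : IrredNonneg C) (hCz : C *ᵥ z = z) :
    ∀ β : ℝ, 0 ≤ β → β ≤ 1 →
      (-(1 : Matrix (Fin n) (Fin n) ℝ) +
        ((1 : Matrix (Fin n) (Fin n) ℝ) - β • Matrix.diagonal z
          - (1 - β) • Matrix.diagonal z) * B1) *ᵥ (β • z) = 0 ∧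
      (-(1 : Matrix (Fin n) (Fin n) ℝ) +
        ((1 : Matrix (Fin n) (Fin n) ℝ) - β • Matrix.diagonal z
          - (1 - β) • Matrix.diagonal z) *
          (((1 : Matrix (Fin n) (Fin n) ℝ) - Matrix.diagonal z)⁻¹ * C)) *ᵥ
        ((1 - β) • z) = 0 ∧
      ∀ B3 : Matrix (Fin n) (Fin n) ℝ,
        (-(1 : Matrix (Fin n) (Fin n) ℝ) +
          ((1 : Matrix (Fin n) (Fin n) ℝ) - β • Matrix.diagonal z
            - (1 - β) • Matrix.diagonal z) * B3) *ᵥ (0 : Fin n → ℝ) = 0 := by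
  intro β hβ0 hβ1
  have hcoef : ∀ (D : Matrix (Fin n) (Fin n) ℝ),
      (1 : Matrix (Fin n) (Fin n) ℝ) - β • D - (1 - β) • D = 1 - D := by
    intro D
    have : β • D + (1 - β) • D = D := by
      rw [← add_smul]; ring_nf; simp
    rw [sub_sub, this]
  have hdet : ((1 : Matrix (Fin n) (Fin n) ℝ) - Matrix.diagonal z).det ≠ 0 := by
    have : (1 : Matrix (Fin n) (Fin n) ℝ) - Matrix.diagonal z
        = Matrix.diagonal (fun i => 1 - z i) := by
      rw [← Matrix.diagonal_one, Matrix.diagonal_sub]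
    rw [this, Matrix.det_diagonal]
    exact Finset.prod_ne_zero_iff.2 fun i _ => by
      have := (hz i).2; linarith
  have hinv : ((1 : Matrix (Fin n) (Fin n) ℝ) - Matrix.diagonal z) *
      ((1 : Matrix (Fin n) (Fin n) ℝ) - Matrix.diagonal z)⁻¹ = 1 :=
    Matrix.mul_nonsing_inv _ (isUnit_iff_ne_zero.2 hdet)
  refine ⟨?_, ?_, ?_⟩
  · rw [hcoef, Matrix.mulVec_smul, heqz, smul_zero]
  · rw [hcoef, ← Matrix.mul_assoc, hinv, Matrix.one_mul,
      Matrix.mulVec_smul]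
    have : (-(1 : Matrix (Fin n) (Fin n) ℝ) + C) *ᵥ z = 0 := by
      rw [Matrix.add_mulVec, Matrix.neg_mulVec, Matrix.one_mulVec, hCz]
      simp
    rw [this, smul_zero]
  · intro B3
    simp [Matrix.mulVec_zero]
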